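/- Let c, z ∈ ℂ and let λ₆ : FVB₂ → GL₂(ℂ) be the homomorphism defined by λ₆(σ₁) = [[1,0],[c,-1]] and λ₆(ρ₁) = [[1,0],[z,-1]]. Then λ₆ is injective (faithful) if and only if z ≠ c. -/

import Mathlib

/-- The relations of the flat virtual braid group on two strands:
`σ₁² = 1` and `ρ₁² = 1`. -/
def FVB2rels : Set (FreeGroup Bool) :=
  {FreeGroup.of true * FreeGroup.of true, FreeGroup.of false * FreeGroup.of false}

/-- The flat virtual braid group `FVB₂ = ⟨σ₁, ρ₁ | σ₁² = ρ₁² = 1⟩`. -/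
abbrev FVB2 : Type := PresentedGroup FVB2rels

/-- The generator `σ₁` of `FVB₂`. -/
def σ1 : FVB2 := PresentedGroup.of true

/-- The generator `ρ₁` of `FVB₂`. -/
def ρ1 : FVB2 := PresentedGroup.of false

lemma sq_σ1 : σ1 * σ1 = 1 := by
  show (QuotientGroup.mk (FreeGroup.of true) : FVB2) * QuotientGroup.mk (FreeGroup.of true) = 1
  exact PresentedGroup.one_of_mem (by left; rfl)

lemma sq_ρ1 : ρ1 * ρ1 = 1 := by
  show (QuotientGroup.mk (FreeGroup.of false) : FVB2) * QuotientGroup.mk (FreeGroup.of false) = 1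
  exact PresentedGroup.one_of_mem (by right; rfl)

lemma inv_σ1 : σ1⁻¹ = σ1 := by
  rw [inv_eq_iff_mul_eq_one]; exact sq_σ1
lemma inv_ρ1 : ρ1⁻¹ = ρ1 := by
  rw [inv_eq_iff_mul_eq_one]; exact sq_ρ1

lemma semiconj : ∀ n : ℤ, σ1 * (σ1 * ρ1) ^ n = (σ1 * ρ1) ^ (-n) * σ1 := by
  have h : SemiconjBy σ1 (σ1 * ρ1) (σ1 * ρ1)⁻¹ := by
    show σ1 * (σ1 * ρ1) = (σ1 * ρ1)⁻¹ * σ1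
    rw [mul_inv_rev, inv_σ1, inv_ρ1, ← mul_assoc σ1 σ1 ρ1, sq_σ1, one_mul,
      mul_assoc, sq_σ1, mul_one]
  intro n
  have := h.zpow_right n
  rwa [inv_zpow, ← zpow_neg] at this

lemma classify (g : FVB2) : ∃ n : ℤ, g = (σ1 * ρ1) ^ n ∨ g = (σ1 * ρ1) ^ n * σ1 := by
  induction g using QuotientGroup.induction_on with
  | _ w =>
    induction w using FreeGroup.induction_on with
    | C1 => exact ⟨0, Or.inl (by rw [zpow_zero]; rfl)⟩
    | of x =>
      cases x
      · refine ⟨-1, Or.inr ?_⟩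
        show ρ1 = _
        rw [zpow_neg_one, mul_inv_rev, inv_σ1, inv_ρ1, mul_assoc, sq_σ1, mul_one]
      · refine ⟨0, Or.inr ?_⟩
        show σ1 = _
        rw [zpow_zero, one_mul]
    | inv_of x _ =>
      cases x
      · refine ⟨-1, Or.inr ?_⟩
        show ρ1⁻¹ = _
        rw [inv_ρ1, zpow_neg_one, mul_inv_rev, inv_σ1, inv_ρ1, mul_assoc, sq_σ1, mul_one]
      · refine ⟨0, Or.inr ?_⟩
        show σ1⁻¹ = _
        rw [inv_σ1, zpow_zero, one_mul]
    | mul x y hx hy =>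
      obtain ⟨m, hm | hm⟩ := hx <;> obtain ⟨n, hn⟩ := hy <;>
        rw [QuotientGroup.mk_mul, hm] <;> rcases hn with hn | hn <;> rw [hn]
      · exact ⟨m + n, Or.inl (by rw [zpow_add]; rfl)⟩
      · exact ⟨m + n, Or.inr (by rw [zpow_add, mul_assoc]; rfl)⟩
      · refine ⟨m - n, Or.inr ?_⟩
        show (σ1 * ρ1) ^ m * σ1 * (σ1 * ρ1) ^ n = _
        rw [mul_assoc, semiconj n, ← mul_assoc, ← zpow_add, sub_eq_add_neg]
      · refine ⟨m - n, Or.inl ?_⟩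
        show (σ1 * ρ1) ^ m * σ1 * ((σ1 * ρ1) ^ n * σ1) = _
        rw [mul_assoc, ← mul_assoc σ1, semiconj n, mul_assoc, sq_σ1, mul_one,
          ← zpow_add, sub_eq_add_neg]

lemma σ_ne_ρ : σ1 ≠ ρ1 := by
  have hrel : ∀ r ∈ FVB2rels,
      (FreeGroup.lift fun b => Multiplicative.ofAdd (if b then (1 : ZMod 2) else 0)) r = 1 := by
    intro r hr
    rcases hr with h | h <;> subst h <;> rw [map_mul] <;> decide
  intro h
  have := congrArg (PresentedGroup.toGroup hrel) h
  rw [show σ1 = PresentedGroup.of true from rfl, show ρ1 = PresentedGroup.of false from rfl,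
    PresentedGroup.toGroup.of, PresentedGroup.toGroup.of] at this
  exact absurd this (by decide)

/-- The representation λ₆ of `FVB₂` with `σ₁ ↦ [[1,0],[c,-1]]`, `ρ₁ ↦ [[1,0],[z,-1]]`
is faithful if and only if `z ≠ c`. -/
theorem stmt5 (c z : ℂ) (f : FVB2 →* GL (Fin 2) ℂ)
    (hσ : (f σ1 : Matrix (Fin 2) (Fin 2) ℂ) = !![1, 0; c, -1])
    (hρ : (f ρ1 : Matrix (Fin 2) (Fin 2) ℂ) = !![1, 0; z, -1]) :
    Function.Injective f ↔ z ≠ c := by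
  constructor
  · intro hinj hzc
    apply σ_ne_ρ
    apply hinj
    apply Units.ext
    rw [hσ, hρ, hzc]
  · intro hzc
    have hmul : (f (σ1 * ρ1) : Matrix (Fin 2) (Fin 2) ℂ) = !![1, 0; c - z, 1] := by
      rw [map_mul, Units.val_mul, hσ, hρ]
      ext i j
      fin_cases i <;> fin_cases j <;>
        simp [Matrix.mul_apply, Fin.sum_univ_two] <;> ring
    set Mu : GL (Fin 2) ℂ :=
      ⟨!![1, 0; c - z, 1], !![1, 0; z - c, 1],
        by ext i j; fin_cases i <;> fin_cases j <;>
          simp [Matrix.mul_apply, Fin.sum_univ_two] <;> ring,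
        by ext i j; fin_cases i <;> fin_cases j <;>
          simp [Matrix.mul_apply, Fin.sum_univ_two] <;> ring⟩ with hMu
    have hMuval : (Mu : Matrix (Fin 2) (Fin 2) ℂ) = !![1, 0; c - z, 1] := rfl
    have hMuinv : ((Mu⁻¹ : GL (Fin 2) ℂ) : Matrix (Fin 2) (Fin 2) ℂ) = !![1, 0; z - c, 1] := rfl
    have hft : f (σ1 * ρ1) = Mu := Units.ext (by rw [hmul, hMuval])
    have hMun : ∀ n : ℤ, ((Mu ^ n : GL (Fin 2) ℂ) : Matrix (Fin 2) (Fin 2) ℂ)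
        = !![1, 0; (n : ℂ) * (c - z), 1] := by
      intro n
      induction n using Int.induction_on with
      | zero =>
        rw [zpow_zero, Units.val_one]
        ext i j
        fin_cases i <;> fin_cases j <;> simp
      | succ k ih =>
        rw [zpow_add_one, Units.val_mul, ih, hMuval]
        ext i j
        fin_cases i <;> fin_cases j <;>
          (simp [Matrix.mul_apply, Fin.sum_univ_two]; try (push_cast; ring))
      | pred k ih =>
        rw [zpow_sub_one, Units.val_mul, ih, hMuinv]
        ext i j
        fin_cases i <;> fin_cases j <;>
          (simp [Matrix.mul_apply, Fin.sum_univ_two]; try (push_cast; ring))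
    rw [injective_iff_map_eq_one]
    intro g hg
    obtain ⟨n, hn | hn⟩ := classify g
    · subst hn
      rw [map_zpow, hft] at hg
      have hmat := congrArg (Units.val) hg
      rw [hMun n, Units.val_one] at hmat
      have h21 := congrFun (congrFun hmat 1) 0
      simp at h21
      rcases h21 with h | h
      · norm_cast at h; subst h; simp
      · exact absurd (sub_eq_zero.mp h).symm hzc
    · subst hn
      rw [map_mul, map_zpow, hft] at hg
      exfalso
      have hmat := congrArg (Units.val) hg
      rw [Units.val_mul, hMun n, hσ, Units.val_one] at hmat
      have h22 := congrFun (congrFun hmat 1) 1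
      simp [Matrix.mul_apply, Fin.sum_univ_two] at h22
      exact absurd h22 (by norm_num)
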